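/- For the binary joint distribution p(a,b,λ) with strictly positive entries and fixed a,λ, the mutual information I(X:Y) is a convex function of b; specifically, ∂²I/∂b² = 1/(b²−1) + (1/16)Σ_{x,y} 1/p_{xy} ≥ 0 whenever −1 < b < 1 and all entries are positive. -/

import Mathlib

noncomputable section

def p00 (a b lam : ℝ) : ℝ := (1 + a + b + lam) / 4
def p01 (a b lam : ℝ) : ℝ := (1 + a - b - lam) / 4
def p10 (a b lam : ℝ) : ℝ := (1 - a + b - lam) / 4
def p11 (a b lam : ℝ) : ℝ := (1 - a - b + lam) / 4

def pX0 (a : ℝ) : ℝ := (1 + a) / 2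
def pX1 (a : ℝ) : ℝ := (1 - a) / 2
def pY0 (b : ℝ) : ℝ := (1 + b) / 2
def pY1 (b : ℝ) : ℝ := (1 - b) / 2

/-- Mutual information of the binary joint distribution `p(a,b,λ)` (natural log). -/
def MI (a b lam : ℝ) : ℝ :=
    p00 a b lam * Real.log (p00 a b lam / (pX0 a * pY0 b))
  + p01 a b lam * Real.log (p01 a b lam / (pX0 a * pY1 b))
  + p10 a b lam * Real.log (p10 a b lam / (pX1 a * pY0 b))
  + p11 a b lam * Real.log (p11 a b lam / (pX1 a * pY1 b))

/-- First derivative of `MI` in `b`. -/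
def G (a t lam : ℝ) : ℝ :=
  (1/4) * (Real.log (p00 a t lam) - Real.log (p01 a t lam)
    + Real.log (p10 a t lam) - Real.log (p11 a t lam))
  - (1/2) * Real.log (pY0 t) + (1/2) * Real.log (pY1 t)

lemma hasDerivAt_p00' (a lam t : ℝ) : HasDerivAt (fun s => p00 a s lam) (1/4) t := by
  have h : HasDerivAt (fun s : ℝ => (1 + a + s + lam) / 4) (1/4) t := by
    simpa using (((hasDerivAt_id t).const_add (1+a)).add_const lam).div_const 4
  simpa [p00] using h

lemma hasDerivAt_p01' (a lam t : ℝ) : HasDerivAt (fun s => p01 a s lam) (-(1/4)) t := by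
  have h : HasDerivAt (fun s : ℝ => (1 + a - s - lam) / 4) (-(1/4)) t := by
    have := (((hasDerivAt_id t).const_sub (1+a)).sub_const lam).div_const 4
    simpa [neg_div] using this
  simpa [p01] using h

lemma hasDerivAt_p10' (a lam t : ℝ) : HasDerivAt (fun s => p10 a s lam) (1/4) t := by
  have h : HasDerivAt (fun s : ℝ => (1 - a + s - lam) / 4) (1/4) t := by
    simpa using (((hasDerivAt_id t).const_add (1-a)).sub_const lam).div_const 4
  simpa [p10] using h

lemma hasDerivAt_p11' (a lam t : ℝ) : HasDerivAt (fun s => p11 a s lam) (-(1/4)) t := by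
  have h : HasDerivAt (fun s : ℝ => (1 - a - s + lam) / 4) (-(1/4)) t := by
    have := (((hasDerivAt_id t).const_sub (1-a)).add_const lam).div_const 4
    simpa [neg_div] using this
  simpa [p11] using h

lemma hasDerivAt_pY0' (t : ℝ) : HasDerivAt pY0 (1/2) t := by
  have h : HasDerivAt (fun s : ℝ => (1 + s) / 2) (1/2) t := by
    simpa using ((hasDerivAt_id t).const_add 1).div_const 2
  exact h

lemma hasDerivAt_pY1' (t : ℝ) : HasDerivAt pY1 (-(1/2)) t := by
  have h : HasDerivAt (fun s : ℝ => (1 - s) / 2) (-(1/2)) t := by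
    have := ((hasDerivAt_id t).const_sub 1).div_const 2
    simpa [neg_div] using this
  exact h

lemma MI_hasDerivAt (a lam t : ℝ)
    (h00 : 0 < p00 a t lam) (h01 : 0 < p01 a t lam)
    (h10 : 0 < p10 a t lam) (h11 : 0 < p11 a t lam)
    (hY0 : 0 < pY0 t) (hY1 : 0 < pY1 t) :
    HasDerivAt (fun s => MI a s lam) (G a t lam) t := by
  have hX0 : 0 < pX0 a := by
    have : pX0 a = p00 a t lam + p01 a t lam := by unfold pX0 p00 p01; ring
    rw [this]; linarith
  have hX1 : 0 < pX1 a := by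
    have : pX1 a = p10 a t lam + p11 a t lam := by unfold pX1 p10 p11; ring
    rw [this]; linarith
  -- the open set where everything is positive
  set S : Set ℝ := {s | 0 < p00 a s lam ∧ 0 < p01 a s lam ∧ 0 < p10 a s lam
      ∧ 0 < p11 a s lam ∧ 0 < pY0 s ∧ 0 < pY1 s} with hSdef
  have hSopen : IsOpen S := by
    have c00 : Continuous (fun s => p00 a s lam) := by unfold p00; fun_prop
    have c01 : Continuous (fun s => p01 a s lam) := by unfold p01; fun_prop
    have c10 : Continuous (fun s => p10 a s lam) := by unfold p10; fun_prop
    have c11 : Continuous (fun s => p11 a s lam) := by unfold p11; fun_prop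
    have cY0 : Continuous pY0 := by unfold pY0; fun_prop
    have cY1 : Continuous pY1 := by unfold pY1; fun_prop
    exact (isOpen_lt continuous_const c00).inter ((isOpen_lt continuous_const c01).inter
      ((isOpen_lt continuous_const c10).inter ((isOpen_lt continuous_const c11).inter
      ((isOpen_lt continuous_const cY0).inter (isOpen_lt continuous_const cY1)))))
  have htS : t ∈ S := ⟨h00, h01, h10, h11, hY0, hY1⟩
  have hSnhds : S ∈ nhds t := hSopen.mem_nhds htS
  -- expanded form of MI
  set F : ℝ → ℝ := fun s =>
      p00 a s lam * (Real.log (p00 a s lam) - Real.log (pX0 a) - Real.log (pY0 s))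
    + p01 a s lam * (Real.log (p01 a s lam) - Real.log (pX0 a) - Real.log (pY1 s))
    + p10 a s lam * (Real.log (p10 a s lam) - Real.log (pX1 a) - Real.log (pY0 s))
    + p11 a s lam * (Real.log (p11 a s lam) - Real.log (pX1 a) - Real.log (pY1 s)) with hF
  have heq : (fun s => MI a s lam) =ᶠ[nhds t] F := by
    filter_upwards [hSnhds] with s hs
    obtain ⟨hs00, hs01, hs10, hs11, hsY0, hsY1⟩ := hs
    unfold MI
    rw [Real.log_div hs00.ne' (mul_pos hX0 hsY0).ne', Real.log_mul hX0.ne' hsY0.ne',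
        Real.log_div hs01.ne' (mul_pos hX0 hsY1).ne', Real.log_mul hX0.ne' hsY1.ne',
        Real.log_div hs10.ne' (mul_pos hX1 hsY0).ne', Real.log_mul hX1.ne' hsY0.ne',
        Real.log_div hs11.ne' (mul_pos hX1 hsY1).ne', Real.log_mul hX1.ne' hsY1.ne']
    ring
  have hd00 := hasDerivAt_p00' a lam t
  have hd01 := hasDerivAt_p01' a lam t
  have hd10 := hasDerivAt_p10' a lam t
  have hd11 := hasDerivAt_p11' a lam t
  have hdY0 := hasDerivAt_pY0' t
  have hdY1 := hasDerivAt_pY1' t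
  have hL00 := hd00.log h00.ne'
  have hL01 := hd01.log h01.ne'
  have hL10 := hd10.log h10.ne'
  have hL11 := hd11.log h11.ne'
  have hLY0 := hdY0.log hY0.ne'
  have hLY1 := hdY1.log hY1.ne'
  have hFd : HasDerivAt F
      ( (1/4 * (Real.log (p00 a t lam) - Real.log (pX0 a) - Real.log (pY0 t))
          + p00 a t lam * (1/4 / p00 a t lam- 1/2 / pY0 t))
      + (-(1/4) * (Real.log (p01 a t lam) - Real.log (pX0 a) - Real.log (pY1 t))
          + p01 a t lam * (-(1/4) / p01 a t lam - -(1/2) / pY1 t))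
      + (1/4 * (Real.log (p10 a t lam) - Real.log (pX1 a) - Real.log (pY0 t))
          + p10 a t lam * (1/4 / p10 a t lam- 1/2 / pY0 t))
      + (-(1/4) * (Real.log (p11 a t lam) - Real.log (pX1 a) - Real.log (pY1 t))
          + p11 a t lam * (-(1/4) / p11 a t lam - -(1/2) / pY1 t)) ) t := by
    exact (((hd00.mul ((hL00.sub_const _).sub hLY0)).add
            (hd01.mul ((hL01.sub_const _).sub hLY1))).add
            (hd10.mul ((hL10.sub_const _).sub hLY0))).add
            (hd11.mul ((hL11.sub_const _).sub hLY1))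
  have hval : ( (1/4 * (Real.log (p00 a t lam) - Real.log (pX0 a) - Real.log (pY0 t))
          + p00 a t lam * (1/4 / p00 a t lam- 1/2 / pY0 t))
      + (-(1/4) * (Real.log (p01 a t lam) - Real.log (pX0 a) - Real.log (pY1 t))
          + p01 a t lam * (-(1/4) / p01 a t lam - -(1/2) / pY1 t))
      + (1/4 * (Real.log (p10 a t lam) - Real.log (pX1 a) - Real.log (pY0 t))
          + p10 a t lam * (1/4 / p10 a t lam- 1/2 / pY0 t))
      + (-(1/4) * (Real.log (p11 a t lam) - Real.log (pX1 a) - Real.log (pY1 t))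
          + p11 a t lam * (-(1/4) / p11 a t lam - -(1/2) / pY1 t)) ) = G a t lam := by
    have e1 : pY0 t = p00 a t lam + p10 a t lam := by unfold p00 p10 pY0; ring
    have e2 : pY1 t = p01 a t lam + p11 a t lam := by unfold p01 p11 pY1; ring
    unfold G
    rw [e1, e2]
    have hs0 : p00 a t lam + p10 a t lam ≠ 0 := by positivity
    have hs1 : p01 a t lam + p11 a t lam ≠ 0 := by positivity
    field_simp
    ring
  exact (hval ▸ hFd).congr_of_eventuallyEq heq

theorem MI_second_deriv_b (a b lam : ℝ) (hb : -1 < b) (hb' : b < 1)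
    (h00 : 0 < p00 a b lam) (h01 : 0 < p01 a b lam)
    (h10 : 0 < p10 a b lam) (h11 : 0 < p11 a b lam) :
    deriv (deriv (fun t => MI a t lam)) b
      = 1 / (b ^ 2 - 1) + (1 / 16) * (1 / p00 a b lam + 1 / p01 a b lam
        + 1 / p10 a b lam + 1 / p11 a b lam) ∧
    0 ≤ deriv (deriv (fun t => MI a t lam)) b := by
  have hY0 : 0 < pY0 b := by unfold pY0; linarith
  have hY1 : 0 < pY1 b := by unfold pY1; linarith
  -- deriv f agrees with G near b
  set S : Set ℝ := {s | 0 < p00 a s lam ∧ 0 < p01 a s lam ∧ 0 < p10 a s lam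
      ∧ 0 < p11 a s lam ∧ 0 < pY0 s ∧ 0 < pY1 s} with hSdef
  have hSopen : IsOpen S := by
    have c00 : Continuous (fun s => p00 a s lam) := by unfold p00; fun_prop
    have c01 : Continuous (fun s => p01 a s lam) := by unfold p01; fun_prop
    have c10 : Continuous (fun s => p10 a s lam) := by unfold p10; fun_prop
    have c11 : Continuous (fun s => p11 a s lam) := by unfold p11; fun_prop
    have cY0 : Continuous pY0 := by unfold pY0; fun_prop
    have cY1 : Continuous pY1 := by unfold pY1; fun_prop
    exact (isOpen_lt continuous_const c00).inter ((isOpen_lt continuous_const c01).inter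
      ((isOpen_lt continuous_const c10).inter ((isOpen_lt continuous_const c11).inter
      ((isOpen_lt continuous_const cY0).inter (isOpen_lt continuous_const cY1)))))
  have hbS : b ∈ S := ⟨h00, h01, h10, h11, hY0, hY1⟩
  have hSnhds : S ∈ nhds b := hSopen.mem_nhds hbS
  have heq : deriv (fun t => MI a t lam) =ᶠ[nhds b] (fun t => G a t lam) := by
    filter_upwards [hSnhds] with s hs
    obtain ⟨hs00, hs01, hs10, hs11, hsY0, hsY1⟩ := hs
    exact (MI_hasDerivAt a lam s hs00 hs01 hs10 hs11 hsY0 hsY1).deriv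
  -- derivative of G at b
  have hGd : HasDerivAt (fun t => G a t lam)
      ( (1/4) * ((1/4) / p00 a b lam - (-(1/4)) / p01 a b lam
          + (1/4) / p10 a b lam - (-(1/4)) / p11 a b lam)
        - (1/2) * ((1/2) / pY0 b) + (1/2) * ((-(1/2)) / pY1 b) ) b := by
    have hL00 := (hasDerivAt_p00' a lam b).log h00.ne'
    have hL01 := (hasDerivAt_p01' a lam b).log h01.ne'
    have hL10 := (hasDerivAt_p10' a lam b).log h10.ne'
    have hL11 := (hasDerivAt_p11' a lam b).log h11.ne'
    have hLY0 := (hasDerivAt_pY0' b).log hY0.ne'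
    have hLY1 := (hasDerivAt_pY1' b).log hY1.ne'
    exact ((((((hL00.sub hL01).add hL10).sub hL11).const_mul (1/4)).sub
      (hLY0.const_mul (1/2))).add (hLY1.const_mul (1/2)))
  have hderiv2 : deriv (deriv (fun t => MI a t lam)) b
      = 1 / (b ^ 2 - 1) + (1 / 16) * (1 / p00 a b lam + 1 / p01 a b lam
        + 1 / p10 a b lam + 1 / p11 a b lam) := by
    rw [heq.deriv_eq, hGd.deriv]
    have hb2 : b ^ 2 - 1 ≠ 0 := by nlinarith
    have hp : (1:ℝ) + b ≠ 0 := by linarith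
    have hm : (1:ℝ) - b ≠ 0 := by linarith
    unfold pY0 pY1
    field_simp
    ring
  refine ⟨hderiv2, ?_⟩
  rw [hderiv2]
  have key : 1 / (1 - b^2) ≤ (1 / 16) * (1 / p00 a b lam + 1 / p01 a b lam
        + 1 / p10 a b lam + 1 / p11 a b lam) := by
    have e1 : p00 a b lam + p10 a b lam = (1+b)/2 := by unfold p00 p10; ring
    have e2 : p01 a b lam + p11 a b lam = (1-b)/2 := by unfold p01 p11; ring
    have h1 : 4 / ((1+b)/2) ≤ 1 / p00 a b lam + 1 / p10 a b lam := by
      rw [div_add_div _ _ h00.ne' h10.ne', div_le_div_iff₀ (by linarith) (mul_pos h00 h10)]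
      nlinarith [sq_nonneg (p00 a b lam - p10 a b lam)]
    have h2 : 4 / ((1-b)/2) ≤ 1 / p01 a b lam + 1 / p11 a b lam := by
      rw [div_add_div _ _ h01.ne' h11.ne', div_le_div_iff₀ (by linarith) (mul_pos h01 h11)]
      nlinarith [sq_nonneg (p01 a b lam - p11 a b lam)]
    have h3 : 1 / (1 - b^2) = (1/16) * (4 / ((1+b)/2) + 4 / ((1-b)/2)) := by
      have hp : (1:ℝ) + b ≠ 0 := by linarith
      have hm : (1:ℝ) - b ≠ 0 := by linarith
      have hq : (1:ℝ) - b^2 ≠ 0 := by nlinarith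
      field_simp
      ring
    rw [h3]
    nlinarith
  have hneg : 1 / (b^2 - 1) = - (1 / (1 - b^2)) := by
    have hq : (1:ℝ) - b^2 ≠ 0 := by nlinarith
    have hq' : b^2 - (1:ℝ) ≠ 0 := by nlinarith
    field_simp
    ring
  rw [hneg]
  linarith
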